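/- Suppose a (sub)probability function f on {1,…,n} satisfies, for each 0 ≤ j' ≤ j, Σ_{t ∈ P_{j'}} f_t ≤ δ, where P_{j'} are the disjoint intervals defined by ℓ, r, and suppose f_t = 0 outside ∪_{j'≤j} P_{j'} ∩ [1, t]. Then for any t ∈ P_j with δ < 1/(2γ(i+1)) and j ≤ i and t ≥ n/γ: α_f(t) = 1 + Σ_{t'≤t} ((n+t'−1−t)/t) f_{t'} ≤ 1 + (j+1)·((n−1)/t)·δ < 3/2. -/

import Mathlib

lemma sum_biUnion_le_aux {α : Type*} [DecidableEq α] (s : Finset ℕ) (t : ℕ → Finset α)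
    (f : α → ℝ) (hf : ∀ x, 0 ≤ f x) :
    ∑ x ∈ s.biUnion t, f x ≤ ∑ i ∈ s, ∑ x ∈ t i, f x := by
  classical
  induction s using Finset.induction_on with
  | empty => simp
  | @insert a s h ih =>
    rw [Finset.biUnion_insert, Finset.sum_insert h]
    calc ∑ x ∈ t a ∪ s.biUnion t, f x
        ≤ (∑ x ∈ t a, f x) + ∑ x ∈ s.biUnion t, f x := by
          have h2 : ∑ x ∈ t a ∪ s.biUnion t, f x + ∑ x ∈ t a ∩ s.biUnion t, f x
              = (∑ x ∈ t a, f x) + ∑ x ∈ s.biUnion t, f x := Finset.sum_union_inter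
          have h3 : 0 ≤ ∑ x ∈ t a ∩ s.biUnion t, f x :=
            Finset.sum_nonneg fun x _ => hf x
          linarith
      _ ≤ (∑ x ∈ t a, f x) + ∑ i ∈ s, ∑ x ∈ t i, f x := by linarith [ih]

/-- If f has mass at most δ in each interval P_{j'} (j' ≤ j) and vanishes outside them on
[1, t], then for t ∈ P_j with t ≥ n/γ, δ < 1/(2γ(i+1)) and j ≤ i:
α_f(t) = 1 + Σ_{t'≤t} ((n+t'−1−t)/t) f_{t'} ≤ 1 + (j+1)((n−1)/t)δ < 3/2. -/
theorem stmt_15 (n γ m : ℕ) (hγ : 2 ≤ γ) (hnm : n - 1 = γ^m)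
    (ℓ r : ℕ → ℕ)
    (hℓ : ∀ j : ℕ, j + 1 ≤ m →
      ((ℓ j : ℝ)) = ((n:ℝ) - 1)/((γ:ℝ) - 1) * (1 - (γ:ℝ)^(-(j:ℤ))) + 1)
    (hr : ∀ j : ℕ, j + 1 ≤ m →
      ((r j : ℝ)) = ((n:ℝ) - 1)/((γ:ℝ) - 1) * (1 - (γ:ℝ)^(-(j:ℤ) - 1)))
    (i j : ℕ) (hji : j ≤ i) (hjm : j + 1 ≤ m)
    (δ : ℝ) (hδ : δ < 1/(2*(γ:ℝ)*((i:ℝ) + 1)))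
    (f : ℕ → ℝ) (hf : ∀ t, 0 ≤ f t)
    (hmass : ∀ j' : ℕ, j' ≤ j → ∑ t ∈ Finset.Icc (ℓ j') (r j'), f t ≤ δ)
    (t : ℕ) (ht : t ∈ Finset.Icc (ℓ j) (r j)) (htn : (n:ℝ)/(γ:ℝ) ≤ (t:ℝ))
    (hsupp : ∀ t', 1 ≤ t' → t' ≤ t →
      (∀ j' : ℕ, j' ≤ j → t' ∉ Finset.Icc (ℓ j') (r j')) → f t' = 0) :
    1 + ∑ t' ∈ Finset.Icc 1 t, (((n:ℝ) + t' - 1 - t)/t) * f t'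
        ≤ 1 + ((j:ℝ) + 1) * (((n:ℝ) - 1)/t) * δ ∧
    1 + ((j:ℝ) + 1) * (((n:ℝ) - 1)/t) * δ < 3/2 := by
  classical
  have hn2 : 2 ≤ n := by
    have h1 : 1 ≤ γ ^ m := Nat.one_le_pow _ _ (by omega)
    omega
  have hnR : (2:ℝ) ≤ (n:ℝ) := by exact_mod_cast hn2
  have hγR : (2:ℝ) ≤ (γ:ℝ) := by exact_mod_cast hγ
  have htpos : (0:ℝ) < (t:ℝ) := lt_of_lt_of_le (by positivity) htn
  have hδ0 : 0 ≤ δ :=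
    le_trans (Finset.sum_nonneg fun x _ => hf x) (hmass j le_rfl)
  -- sum of f over [1,t] is at most (j+1)δ
  set S : Finset ℕ := (Finset.range (j+1)).biUnion (fun j' => Finset.Icc (ℓ j') (r j')) with hS
  have hsum : ∑ t' ∈ Finset.Icc 1 t, f t' ≤ ((j:ℝ)+1) * δ := by
    have h1 : ∑ t' ∈ Finset.Icc 1 t, f t'
        = ∑ t' ∈ (Finset.Icc 1 t).filter (· ∈ S), f t' := by
      rw [Finset.sum_filter_of_ne]
      intro x hx hfx
      simp only [Finset.mem_Icc] at hx
      by_contra hxS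
      apply hfx
      apply hsupp x hx.1 hx.2
      intro j' hj' hmem
      exact hxS (Finset.mem_biUnion.mpr ⟨j', Finset.mem_range.mpr (by omega), hmem⟩)
    have h2 : ∑ t' ∈ (Finset.Icc 1 t).filter (· ∈ S), f t' ≤ ∑ t' ∈ S, f t' :=
      Finset.sum_le_sum_of_subset_of_nonneg
        (fun x hx => (Finset.mem_filter.mp hx).2) (fun x _ _ => hf x)
    have h3 : ∑ t' ∈ S, f t'
        ≤ ∑ j' ∈ Finset.range (j+1), ∑ t' ∈ Finset.Icc (ℓ j') (r j'), f t' :=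
      sum_biUnion_le_aux _ _ _ hf
    have h4 : ∑ j' ∈ Finset.range (j+1), ∑ t' ∈ Finset.Icc (ℓ j') (r j'), f t'
        ≤ ∑ j' ∈ Finset.range (j+1), δ := by
      apply Finset.sum_le_sum
      intro j' hj'
      exact hmass j' (by simpa using Nat.lt_succ_iff.mp (Finset.mem_range.mp hj'))
    rw [Finset.sum_const, Finset.card_range] at h4
    have : ((j+1) : ℕ) • δ = ((j:ℝ)+1) * δ := by
      simp [nsmul_eq_mul]
    linarith [h1 ▸ le_trans h2 (le_trans h3 h4), this ▸ le_trans h2 (le_trans h3 h4)]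
  -- weighted sum bound
  have hwsum : ∑ t' ∈ Finset.Icc 1 t, (((n:ℝ) + t' - 1 - t)/t) * f t'
      ≤ (((n:ℝ) - 1)/t) * ∑ t' ∈ Finset.Icc 1 t, f t' := by
    rw [Finset.mul_sum]
    apply Finset.sum_le_sum
    intro x hx
    simp only [Finset.mem_Icc] at hx
    have hxt : (x:ℝ) ≤ (t:ℝ) := by exact_mod_cast hx.2
    apply mul_le_mul_of_nonneg_right _ (hf x)
    exact div_le_div_of_nonneg_right (by linarith) htpos.le
  have hc0 : 0 ≤ ((n:ℝ) - 1)/t := div_nonneg (by linarith) htpos.le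
  have hcγ : ((n:ℝ) - 1)/t ≤ (γ:ℝ) := by
    rw [div_le_iff₀ htpos]
    have : (n:ℝ) ≤ (γ:ℝ) * t := by
      rw [div_le_iff₀ (by linarith : (0:ℝ) < (γ:ℝ))] at htn
      linarith [htn]
    linarith
  constructor
  · have := mul_le_mul_of_nonneg_left hsum hc0
    nlinarith [hwsum]
  · have hji1 : (j:ℝ) + 1 ≤ (i:ℝ) + 1 := by
      have : (j:ℝ) ≤ (i:ℝ) := by exact_mod_cast hji
      linarith
    have h5 : ((j:ℝ) + 1) * (((n:ℝ) - 1)/t) * δ ≤ ((i:ℝ)+1) * (γ:ℝ) * δ := by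
      apply mul_le_mul_of_nonneg_right _ hδ0
      exact mul_le_mul hji1 hcγ hc0 (by positivity)
    have h6 : ((i:ℝ)+1) * (γ:ℝ) * δ < 1/2 := by
      have hpos : (0:ℝ) < ((i:ℝ)+1) * (γ:ℝ) := by positivity
      have := mul_lt_mul_of_pos_left hδ hpos
      have heq : ((i:ℝ)+1) * (γ:ℝ) * (1/(2*(γ:ℝ)*((i:ℝ) + 1))) = 1/2 := by
        field_simp
      linarith [heq ▸ this]
    linarith
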